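/- The one-state Turing machine M_cc does not halt on input u^n 0^m h whenever n < 2^m − 1: its head eventually reaches the blank region to the left of the input and moves left forever. -/

import Mathlib

inductive Dir : Type
  | L | R
deriving DecidableEq

def Dir.move : Dir → ℤ
  | .L => -1
  | .R => 1

/-- A one-state Turing machine: a blank symbol, a set of halting symbols
(as a Boolean predicate) and a transition function on the tape alphabet. -/
structure OneStateTM (Γ : Type) where
  blank : Γ
  halt : Γ → Bool
  δ : Γ → Γ × Dir

/-- A configuration: a bi-infinite tape and a head position. -/
structure Cfg (Γ : Type) where
  tape : ℤ → Γ
  pos : ℤ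

/-- One step of the machine; `none` means the machine has halted
(the head reads a halting symbol). -/
def OneStateTM.step {Γ : Type} (M : OneStateTM Γ) (c : Cfg Γ) : Option (Cfg Γ) :=
  if M.halt (c.tape c.pos) then none
  else some ⟨Function.update c.tape c.pos (M.δ (c.tape c.pos)).1,
             c.pos + (M.δ (c.tape c.pos)).2.move⟩

/-- Initial tape: the input written in cells 0,…,len−1, blanks elsewhere. -/
def OneStateTM.initTape {Γ : Type} (M : OneStateTM Γ) (l : List Γ) : ℤ → Γ :=
  fun i => if i < 0 then M.blank else l.getD i.toNat M.blank

/-- The machine halts starting from configuration `c`. -/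
def OneStateTM.HaltsFrom {Γ : Type} (M : OneStateTM Γ) (c : Cfg Γ) : Prop :=
  ∃ n : ℕ, (fun o => Option.bind o M.step)^[n] (some c) = none

/-- The machine halts on input `l` (head initially on the leftmost input symbol). -/
def OneStateTM.HaltsOn {Γ : Type} (M : OneStateTM Γ) (l : List Γ) : Prop :=
  M.HaltsFrom ⟨M.initTape l, 0⟩

/-- The tape alphabet of M_cc: blank, u, U, h, 0, 1, Z, C, B. -/
inductive Tcc : Type
  | blank | u | bigU | h | z0 | one | Z | C | B
deriving DecidableEq

/-- The one-state Turing machine M_cc. -/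
def Mcc : OneStateTM Tcc where
  blank := .blank
  halt := fun a => match a with | .h => true | _ => false
  δ := fun a => match a with
    | .u => (.bigU, .R)
    | .z0 => (.one, .L)
    | .bigU => (.C, .R)
    | .one => (.Z, .R)
    | .Z => (.z0, .L)
    | .C => (.B, .L)
    | .B => (.C, .R)
    | .blank => (.blank, .L)
    | .h => (.h, .R)   -- irrelevant: h is halting

/-- The input u^n 0^m h. -/
def ccInput (n m : ℕ) : List Tcc :=
  List.replicate n .u ++ List.replicate m .z0 ++ [.h]

namespace MccProof

abbrev F : Option (Cfg Tcc) → Option (Cfg Tcc) := fun o => Option.bind o Mcc.step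

def Reaches (c c' : Cfg Tcc) : Prop := ∃ k : ℕ, F^[k] (some c) = some c'

lemma Reaches.refl (c : Cfg Tcc) : Reaches c c := ⟨0, rfl⟩

lemma Reaches.trans {a b c : Cfg Tcc} (h1 : Reaches a b) (h2 : Reaches b c) :
    Reaches a c := by
  obtain ⟨k1, h1⟩ := h1
  obtain ⟨k2, h2⟩ := h2
  exact ⟨k2 + k1, by rw [Function.iterate_add_apply, h1, h2]⟩

lemma Reaches.single {a b : Cfg Tcc} (h : Mcc.step a = some b) : Reaches a b :=
  ⟨1, by simp [F, h]⟩

lemma cfg_eq (t : ℤ → Tcc) {p q : ℤ} (h : p = q) : (⟨t, p⟩ : Cfg Tcc) = ⟨t, q⟩ := by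
  rw [h]

lemma F_none (k : ℕ) : F^[k] none = none := Function.iterate_fixed rfl k

lemma notHalts_of_reaches {a b : Cfg Tcc} (h : Reaches a b)
    (hb : ¬ Mcc.HaltsFrom b) : ¬ Mcc.HaltsFrom a := by
  obtain ⟨k, hk⟩ := h
  rintro ⟨n, hn⟩
  apply hb
  rcases le_or_gt n k with hle | hlt
  · exfalso
    have : F^[k] (some a) = none := by
      have : F^[(k - n) + n] (some a) = none := by
        rw [Function.iterate_add_apply, hn, F_none]
      rwa [Nat.sub_add_cancel hle] at this
    rw [hk] at this; cases this
  · refine ⟨n - k, ?_⟩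
    rw [← hk, ← Function.iterate_add_apply, Nat.sub_add_cancel hlt.le, hn]

lemma step_eq (t : ℤ → Tcc) (p : ℤ) (s s' : Tcc) (d : Dir) (h : t p = s)
    (hδ : Mcc.δ s = (s', d)) (hh : Mcc.halt s = false) :
    Mcc.step ⟨t, p⟩ = some ⟨Function.update t p s', p + d.move⟩ := by
  simp [OneStateTM.step, h, hh, hδ]

lemma nonhalt_blank (t : ℤ → Tcc) (p : ℤ) (h : ∀ i ≤ p, t i = Tcc.blank) :
    ¬ Mcc.HaltsFrom ⟨t, p⟩ := by
  have key : ∀ k : ℕ, F^[k] (some ⟨t, p⟩) = some ⟨t, p - k⟩ := by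
    intro k
    induction k with
    | zero => simp
    | succ k ih =>
      rw [Function.iterate_succ_apply', ih]
      have hb : t (p - k) = Tcc.blank := h _ (by omega)
      have : Mcc.step ⟨t, p - (k : ℤ)⟩ =
          some ⟨Function.update t (p - k) Tcc.blank, (p - k) + Dir.L.move⟩ :=
        step_eq _ _ _ _ _ hb rfl rfl
      rw [← hb] at this
      rw [Function.update_eq_self] at this
      show F (some ⟨t, p - (k : ℤ)⟩) = _
      simp only [F, Option.bind_some]
      rw [this]
      congr 1
      all_goals exact cfg_eq _ (by simp only [Dir.move]; omega)
  rintro ⟨n, hn⟩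
  rw [key n] at hn
  cases hn

lemma sweepR (s s' : Tcc) (hδ : Mcc.δ s = (s', Dir.R)) (hh : Mcc.halt s = false)
    (a : ℕ) : ∀ (t : ℤ → Tcc) (p : ℤ),
    (∀ i, p ≤ i → i < p + a → t i = s) →
    ∃ t', Reaches ⟨t, p⟩ ⟨t', p + a⟩ ∧
      (∀ i, p ≤ i → i < p + a → t' i = s') ∧
      (∀ i, i < p ∨ p + a ≤ i → t' i = t i) := by
  induction a with
  | zero =>
    intro t p _
    exact ⟨t, by simpa using Reaches.refl _, by intro i h1 h2; omega,
      fun i _ => rfl⟩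
  | succ a ih =>
    intro t p ht
    have hstep : Mcc.step ⟨t, p⟩ =
        some ⟨Function.update t p s', p + Dir.R.move⟩ :=
      step_eq _ _ _ _ _ (ht p le_rfl (by push_cast; omega)) hδ hh
    obtain ⟨t', hr, h1, h2⟩ := ih (Function.update t p s') (p + 1) (by
      intro i hi1 hi2
      rw [Function.update_of_ne (by omega)]
      exact ht i (by omega) (by push_cast at hi2 ⊢; omega))
    refine ⟨t', ?_, ?_, ?_⟩
    · have : Reaches ⟨t, p⟩ ⟨Function.update t p s', p + 1⟩ := by
        refine Reaches.single ?_
        rw [hstep]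
        congr 1
        all_goals exact cfg_eq _ (by simp only [Dir.move]; omega)
      have := this.trans hr
      have heq : p + 1 + (a : ℤ) = p + ((a : ℕ) + 1 : ℕ) := by push_cast; ring
      rwa [heq] at this
    · intro i hi1 hi2
      rcases eq_or_lt_of_le hi1 with heq | hlt
      · rw [← heq, h2 p (Or.inl (by omega))]
        simp
      · exact h1 i (by omega) (by push_cast at hi2 ⊢; omega)
    · intro i hi
      rw [h2 i (by push_cast at hi ⊢; omega), Function.update_of_ne (by omega)]

lemma sweepL (s s' : Tcc) (hδ : Mcc.δ s = (s', Dir.L)) (hh : Mcc.halt s = false)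
    (a : ℕ) : ∀ (t : ℤ → Tcc) (p : ℤ),
    (∀ i, p - a < i → i ≤ p → t i = s) →
    ∃ t', Reaches ⟨t, p⟩ ⟨t', p - a⟩ ∧
      (∀ i, p - a < i → i ≤ p → t' i = s') ∧
      (∀ i, i ≤ p - a ∨ p < i → t' i = t i) := by
  induction a with
  | zero =>
    intro t p _
    exact ⟨t, by simpa using Reaches.refl _, by intro i h1 h2; omega,
      fun i _ => rfl⟩
  | succ a ih =>
    intro t p ht
    have hstep : Mcc.step ⟨t, p⟩ =
        some ⟨Function.update t p s', p + Dir.L.move⟩ :=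
      step_eq _ _ _ _ _ (ht p (by push_cast; omega) le_rfl) hδ hh
    obtain ⟨t', hr, h1, h2⟩ := ih (Function.update t p s') (p - 1) (by
      intro i hi1 hi2
      rw [Function.update_of_ne (by omega)]
      exact ht i (by push_cast at hi1 ⊢; omega) (by omega))
    refine ⟨t', ?_, ?_, ?_⟩
    · have hst : Reaches ⟨t, p⟩ ⟨Function.update t p s', p - 1⟩ := by
        refine Reaches.single ?_
        rw [hstep]
        congr 1
        all_goals exact cfg_eq _ (by simp only [Dir.move]; omega)
      have := hst.trans hr
      have heq : p - 1 - (a : ℤ) = p - ((a : ℕ) + 1 : ℕ) := by push_cast; ring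
      rwa [heq] at this
    · intro i hi1 hi2
      rcases eq_or_lt_of_le hi2 with heq | hlt
      · rw [heq, h2 p (Or.inr (by omega))]
        simp
      · exact h1 i (by push_cast at hi1 ⊢; omega) (by omega)
    · intro i hi
      rw [h2 i (by push_cast at hi ⊢; omega), Function.update_of_ne (by omega)]

/-- Binary increment of the counter. -/
lemma inc (m : ℕ) : ∀ (v : ℕ), v + 1 < 2 ^ m → ∀ (t : ℤ → Tcc) (p : ℤ),
    (∀ j : ℕ, j < m → t (p + j) = (if Nat.testBit v j then Tcc.one else Tcc.z0)) →
    ∃ t', Reaches ⟨t, p⟩ ⟨t', p - 1⟩ ∧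
      (∀ j : ℕ, j < m → t' (p + j) = (if Nat.testBit (v + 1) j then Tcc.one else Tcc.z0)) ∧
      (∀ i : ℤ, i < p ∨ p + m ≤ i → t' i = t i) := by
  induction m with
  | zero => intro v hv; omega
  | succ m ih =>
    intro v hv t p hcnt
    rcases Nat.even_or_odd v with he | ho
    · -- v even: one step, 0 → 1, move left
      have hmod : v % 2 = 0 := Nat.even_iff.mp he
      have ht0 : t p = Tcc.z0 := by
        have := hcnt 0 (by omega)
        simpa [Nat.testBit_zero, hmod] using this
      have hstep : Mcc.step ⟨t, p⟩ =
          some ⟨Function.update t p Tcc.one, p + Dir.L.move⟩ :=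
        step_eq _ _ _ _ _ ht0 rfl rfl
      refine ⟨Function.update t p Tcc.one, ?_, ?_, ?_⟩
      · refine Reaches.single ?_
        rw [hstep]
        congr 1
        all_goals exact cfg_eq _ (by simp only [Dir.move]; omega)
      · intro j hj
        match j with
        | 0 =>
          have hb : Nat.testBit (v + 1) 0 = true := by
            simp only [Nat.testBit_zero, decide_eq_true_eq]; omega
          have e : p + ((0 : ℕ) : ℤ) = p := by norm_num
          rw [e, Function.update_self, hb]
          simp
        | Nat.succ j' =>
          rw [Function.update_of_ne (by push_cast; omega)]
          rw [hcnt (j' + 1) hj]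
          have h2 : (v + 1) / 2 = v / 2 := by omega
          rw [Nat.testBit_succ, Nat.testBit_succ, h2]
      · intro i hi
        rw [Function.update_of_ne (by omega)]
    · -- v odd: 1 → Z, move right, recurse, then Z → 0, move left
      have hmod : v % 2 = 1 := Nat.odd_iff.mp ho
      have ht0 : t p = Tcc.one := by
        have := hcnt 0 (by omega)
        simpa [Nat.testBit_zero, hmod] using this
      have hstep1 : Mcc.step ⟨t, p⟩ =
          some ⟨Function.update t p Tcc.Z, p + Dir.R.move⟩ :=
        step_eq _ _ _ _ _ ht0 rfl rfl
      have h2m : 2 ^ (m + 1) = 2 * 2 ^ m := by ring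
      have hv2 : v / 2 + 1 < 2 ^ m := by omega
      obtain ⟨t'', hr, hc, hu⟩ := ih (v / 2) hv2 (Function.update t p Tcc.Z) (p + 1) (by
        intro j hj
        rw [Function.update_of_ne (by omega)]
        have := hcnt (j + 1) (by omega)
        rw [Nat.testBit_succ] at this
        rw [← this]
        congr 1
        push_cast; ring)
      have htZ : t'' p = Tcc.Z := by
        rw [hu p (Or.inl (by omega))]
        simp
      have hstep2 : Mcc.step ⟨t'', p⟩ =
          some ⟨Function.update t'' p Tcc.z0, p + Dir.L.move⟩ :=
        step_eq _ _ _ _ _ htZ rfl rfl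
      refine ⟨Function.update t'' p Tcc.z0, ?_, ?_, ?_⟩
      · have s1 : Reaches ⟨t, p⟩ ⟨Function.update t p Tcc.Z, p + 1⟩ := by
          refine Reaches.single ?_
          rw [hstep1]
          congr 1
          all_goals exact cfg_eq _ (by simp only [Dir.move]; omega)
        have s2 : Reaches ⟨t'', p⟩ ⟨Function.update t'' p Tcc.z0, p - 1⟩ := by
          refine Reaches.single ?_
          rw [hstep2]
          congr 1
          all_goals exact cfg_eq _ (by simp only [Dir.move]; omega)
        have hr' : Reaches ⟨Function.update t p Tcc.Z, p + 1⟩ ⟨t'', p⟩ := by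
          have heq : p + 1 - 1 = p := by omega
          rwa [heq] at hr
        exact (s1.trans hr').trans s2
      · intro j hj
        match j with
        | 0 =>
          have hb : Nat.testBit (v + 1) 0 = false := by
            simp only [Nat.testBit_zero, decide_eq_false_iff_not]; omega
          have e : p + ((0 : ℕ) : ℤ) = p := by norm_num
          rw [e, Function.update_self, hb]
          simp
        | Nat.succ j' =>
          rw [Function.update_of_ne (by push_cast; omega)]
          have := hc j' (by omega)
          have heq : p + 1 + (j' : ℤ) = p + ((j' : ℕ) + 1 : ℕ) := by push_cast; ring
          rw [heq] at this
          rw [this]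
          have h2 : v / 2 + 1 = (v + 1) / 2 := by omega
          rw [Nat.testBit_succ, h2]
      · intro i hi
        rw [Function.update_of_ne (by omega)]
        rw [hu i (by push_cast at hi ⊢; omega)]
        rw [Function.update_of_ne (by omega)]

/-- Main phase lemma: head at counter entry, left region U^a C^b, counter = b. -/
lemma run (m : ℕ) : ∀ (a : ℕ), ∀ (b : ℕ) (t : ℤ → Tcc) (p : ℤ),
    (∀ i, p - a - b ≤ i → i < p - b → t i = Tcc.bigU) →
    (∀ i, p - b ≤ i → i < p → t i = Tcc.C) →
    (∀ j : ℕ, j < m → t (p + j) = (if Nat.testBit b j then Tcc.one else Tcc.z0)) →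
    (∀ i, i < p - a - b → t i = Tcc.blank) →
    a + b + 1 < 2 ^ m →
    ¬ Mcc.HaltsFrom ⟨t, p⟩ := by
  intro a
  induction a with
  | zero =>
    intro b t p hU hC hcnt hblank hlt
    obtain ⟨t1, r1, hc1, hu1⟩ := inc m b (by omega) t p hcnt
    obtain ⟨t2, r2, hc2, hu2⟩ := sweepL Tcc.C Tcc.B rfl rfl b t1 (p - 1) (by
      intro i hi1 hi2
      rw [hu1 i (Or.inl (by omega))]
      exact hC i (by omega) (by omega))
    have hnh : ¬ Mcc.HaltsFrom ⟨t2, p - 1 - b⟩ := by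
      apply nonhalt_blank
      intro i hi
      rw [hu2 i (Or.inl (by omega)), hu1 i (Or.inl (by omega))]
      exact hblank i (by push_cast; omega)
    exact notHalts_of_reaches (r1.trans r2) hnh
  | succ a ih =>
    intro b t p hU hC hcnt hblank hlt
    obtain ⟨t1, r1, hc1, hu1⟩ := inc m b (by omega) t p hcnt
    obtain ⟨t2, r2, hc2, hu2⟩ := sweepL Tcc.C Tcc.B rfl rfl b t1 (p - 1) (by
      intro i hi1 hi2
      rw [hu1 i (Or.inl (by omega))]
      exact hC i (by omega) (by omega))
    -- now head at p - 1 - b, reading U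
    have htU : t2 (p - 1 - b) = Tcc.bigU := by
      rw [hu2 _ (Or.inl (by omega)), hu1 _ (Or.inl (by omega))]
      exact hU _ (by push_cast; omega) (by omega)
    have hstep : Mcc.step ⟨t2, p - 1 - b⟩ =
        some ⟨Function.update t2 (p - 1 - b) Tcc.C, (p - 1 - b) + Dir.R.move⟩ :=
      step_eq _ _ _ _ _ htU rfl rfl
    set t2' := Function.update t2 (p - 1 - b) Tcc.C with ht2'
    obtain ⟨t3, r3, hc3, hu3⟩ := sweepR Tcc.B Tcc.C rfl rfl b t2' (p - b) (by
      intro i hi1 hi2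
      rw [ht2', Function.update_of_ne (by omega)]
      exact hc2 i (by omega) (by omega))
    have rall : Reaches ⟨t, p⟩ ⟨t3, p⟩ := by
      have s1 : Reaches ⟨t2, p - 1 - b⟩ ⟨t2', p - b⟩ := by
        refine Reaches.single ?_
        rw [hstep]
        congr 1
        all_goals exact cfg_eq _ (by simp only [Dir.move]; omega)
      have r3' : Reaches ⟨t2', p - b⟩ ⟨t3, p⟩ := by
        have heq : p - (b : ℤ) + (b : ℤ) = p := by omega
        rwa [heq] at r3
      have r2' : Reaches ⟨t1, p - 1⟩ ⟨t2, p - 1 - b⟩ := r2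
      exact ((r1.trans r2').trans s1).trans r3'
    refine notHalts_of_reaches rall (ih (b + 1) t3 p ?_ ?_ ?_ ?_ (by omega))
    · intro i hi1 hi2
      rw [hu3 i (Or.inl (by push_cast at hi2 ⊢; omega)), ht2',
        Function.update_of_ne (by push_cast at hi2 ⊢; omega),
        hu2 i (Or.inl (by push_cast at hi2 ⊢; omega)),
        hu1 i (Or.inl (by omega))]
      exact hU i (by push_cast at hi1 ⊢; omega) (by push_cast at hi2 ⊢; omega)
    · intro i hi1 hi2
      rcases eq_or_lt_of_le hi1 with heq | hlt'
      · rw [hu3 i (Or.inl (by omega))]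
        rw [ht2']
        have : i = p - 1 - b := by push_cast at heq ⊢; omega
        rw [this]; simp
      · exact hc3 i (by push_cast at hlt' ⊢; omega) (by omega)
    · intro j hj
      rw [hu3 _ (Or.inr (by push_cast; omega)), ht2',
        Function.update_of_ne (by push_cast; omega),
        hu2 _ (Or.inr (by push_cast; omega))]
      exact hc1 j hj
    · intro i hi
      rw [hu3 i (Or.inl (by push_cast at hi ⊢; omega)), ht2',
        Function.update_of_ne (by push_cast at hi ⊢; omega),
        hu2 i (Or.inl (by push_cast at hi ⊢; omega)),
        hu1 i (Or.inl (by push_cast at hi ⊢; omega))]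
      exact hblank i (by push_cast at hi ⊢; omega)

lemma initTape_cc (n m : ℕ) :
    (∀ i : ℤ, 0 ≤ i → i < n → Mcc.initTape (ccInput n m) i = Tcc.u) ∧
    (∀ j : ℕ, j < m → Mcc.initTape (ccInput n m) ((n : ℤ) + j) = Tcc.z0) ∧
    (∀ i : ℤ, i < 0 → Mcc.initTape (ccInput n m) i = Tcc.blank) := by
  refine ⟨?_, ?_, ?_⟩
  · intro i h0 hn
    have hne : ¬ (i < 0) := by omega
    simp only [OneStateTM.initTape, hne, if_false]
    have hlt : i.toNat < n := by omega
    rw [ccInput, List.append_assoc, List.getD_eq_getElem?_getD,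
      List.getElem?_append_left (by simpa using hlt)]
    simp [hlt]
  · intro j hj
    have hne : ¬ ((n : ℤ) + j < 0) := by omega
    simp only [OneStateTM.initTape, hne, if_false]
    have htn : ((n : ℤ) + j).toNat = n + j := by omega
    rw [ccInput, List.append_assoc, List.getD_eq_getElem?_getD, htn,
      List.getElem?_append_right (by simp)]
    simp only [List.length_replicate, Nat.add_sub_cancel_left]
    rw [List.getElem?_append_left (by simpa using hj)]
    simp [hj]
  · intro i hi
    simp only [OneStateTM.initTape, hi, if_true]
    rfl

end MccProof

/-- M_cc does not halt on input u^n 0^m h whenever n < 2^m − 1. -/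
theorem Mcc_not_halts_of_lt : ∀ n m : ℕ, n < 2 ^ m - 1 → ¬ Mcc.HaltsOn (ccInput n m) := by
  intro n m hnm
  have h1 : 1 ≤ 2 ^ m := Nat.one_le_two_pow
  have h2 : n + 1 < 2 ^ m := by omega
  obtain ⟨fu, fz, fb⟩ := MccProof.initTape_cc n m
  obtain ⟨t1, r1, hc1, hu1⟩ := MccProof.sweepR Tcc.u Tcc.bigU rfl rfl n
    (Mcc.initTape (ccInput n m)) 0 (by
      intro i hi1 hi2
      exact fu i hi1 (by omega))
  have r1' : MccProof.Reaches ⟨Mcc.initTape (ccInput n m), 0⟩ ⟨t1, (n : ℤ)⟩ := by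
    have heq : (0 : ℤ) + (n : ℕ) = (n : ℤ) := by omega
    rwa [heq] at r1
  have hnh : ¬ Mcc.HaltsFrom ⟨t1, (n : ℤ)⟩ := by
    apply MccProof.run m n 0 t1 (n : ℤ)
    · intro i hi1 hi2
      exact hc1 i (by omega) (by omega)
    · intro i hi1 hi2; omega
    · intro j hj
      rw [hu1 _ (Or.inr (by omega))]
      rw [fz j hj]
      simp [Nat.zero_testBit]
    · intro i hi
      rw [hu1 i (Or.inl (by omega))]
      exact fb i (by omega)
    · omega
  exact MccProof.notHalts_of_reaches r1' hnh
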